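/- (Sparse representation of the final state.) With the query model as defined in the context, suppose 0 ≤ q ≤ N−1 and suppose V is nontrivial. Then the final state ψ := (A_q ⊗ id) ∘ c𝔘 ∘ (A_{q−1} ⊗ id) ∘ ⋯ ∘ c𝔘 ∘ (A_0 ⊗ id) applied to (φ₀ ⊗ 0̂) can be written as ψ = ∑_{k=0}^{q} α_k • (ψ_k ⊗ k̂), where each ψ_k ∈ H is a unit vector, the α_k are complex numbers with ∑_{k=0}^{q} |α_k|² = 1, and k̂ is the k-th Fourier basis vector. -/

import Mathlib

open scoped Kronecker

noncomputable section

/-- `ω N = exp(2πi/N)`, the primitive `N`-th root of unity. -/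
def ω (N : ℕ) : ℂ := Complex.exp (2 * Real.pi * Complex.I / N)

/-- The computational (standard) basis vector `e_y` of `EuclideanSpace ℂ (Fin N)`. -/
def e (N : ℕ) (y : Fin N) : EuclideanSpace ℂ (Fin N) := EuclideanSpace.single y 1

/-- The Fourier basis vector `k̂ = (1/√N) ∑_y ω_N^{k·y} • e_y`. -/
def fHat (N : ℕ) (k : Fin N) : EuclideanSpace ℂ (Fin N) :=
  (↑(Real.sqrt N))⁻¹ • ∑ y : Fin N, ω N ^ ((k : ℕ) * (y : ℕ)) • e N y

/-- The tensor product of two Euclidean vectors, realized concretely: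
`(x ⊗ z) (i, j) = x i * z j`. -/
def tp {ι κ : Type*} [Fintype ι] [Fintype κ]
    (x : EuclideanSpace ℂ ι) (z : EuclideanSpace ℂ κ) : EuclideanSpace ℂ (ι × κ) :=
  (EuclideanSpace.equiv (ι × κ) ℂ).symm fun p => x p.1 * z p.2

variable {ιV ιW : Type*} [Fintype ιV] [DecidableEq ιV] [Fintype ιW] [DecidableEq ιW]

/-- The matrix `|u⟩⟨u|` of the orthogonal projection `P_u` onto `ℂ ∙ u`
(for a unit vector `u`). -/
def PuM (u : EuclideanSpace ℂ ιV) : Matrix ιV ιV ℂ :=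
  Matrix.of fun i j => u i * star (u j)

/-- The matrix of `U_y = ω_N^y • P_u + (id - P_u)` on `V`. -/
def UyM (N : ℕ) (u : EuclideanSpace ℂ ιV) (y : Fin N) : Matrix ιV ιV ℂ :=
  ω N ^ (y : ℕ) • PuM u + (1 - PuM u)

/-- The matrix of the controlled unitary `cU_y = |0⟩⟨0| ⊗ id_V + |1⟩⟨1| ⊗ U_y` on `ℂ² ⊗ V`. -/
def cUyM (N : ℕ) (u : EuclideanSpace ℂ ιV) (y : Fin N) : Matrix (Fin 2 × ιV) (Fin 2 × ιV) ℂ :=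
  Matrix.single 0 0 (1 : ℂ) ⊗ₖ (1 : Matrix ιV ιV ℂ)
    + Matrix.single 1 1 (1 : ℂ) ⊗ₖ UyM N u y

/-- The matrix of the coherent oracle `c𝔘 = ∑_y (cU_y ⊗ id_W) ⊗ |e_y⟩⟨e_y|` on
`H ⊗ EuclideanSpace ℂ (Fin N)`, where `H = ℂ² ⊗ V ⊗ W`. -/
def oracleM (N : ℕ) (u : EuclideanSpace ℂ ιV) (ιW : Type*) [Fintype ιW] [DecidableEq ιW] :
    Matrix (((Fin 2 × ιV) × ιW) × Fin N) (((Fin 2 × ιV) × ιW) × Fin N) ℂ :=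
  ∑ y : Fin N, (cUyM N u y ⊗ₖ (1 : Matrix ιW ιW ℂ)) ⊗ₖ Matrix.single y y (1 : ℂ)

end

noncomputable section

/-- The total operator (as a matrix) of a `q`-query algorithm:
`algOp A orc q = (A_q ⊗ id) * orc * (A_{q-1} ⊗ id) * ⋯ * orc * (A_0 ⊗ id)`. -/
def algOp {idx : Type*} [Fintype idx] [DecidableEq idx] {N : ℕ}
    (A : ℕ → Matrix idx idx ℂ) (orc : Matrix (idx × Fin N) (idx × Fin N) ℂ) :
    ℕ → Matrix (idx × Fin N) (idx × Fin N) ℂ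
  | 0 => A 0 ⊗ₖ (1 : Matrix (Fin N) (Fin N) ℂ)
  | q + 1 => (A (q + 1) ⊗ₖ (1 : Matrix (Fin N) (Fin N) ℂ)) * orc * algOp A orc q

end


noncomputable section SparseHelpers

open scoped Kronecker
open Matrix Finset Complex
open Fin.NatCast

local notation "⟪" x ", " y "⟫" => @inner ℂ _ _ x y

/-! ### Basic `tp` lemmas -/

variable {ι κ : Type*} [Fintype ι] [Fintype κ]

lemma tp_apply (x : EuclideanSpace ℂ ι) (z : EuclideanSpace ℂ κ) (p : ι × κ) :
    tp x z p = x p.1 * z p.2 := rfl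

lemma tp_add_left (x x' : EuclideanSpace ℂ ι) (z : EuclideanSpace ℂ κ) :
    tp (x + x') z = tp x z + tp x' z := by
  ext p; simp [tp_apply, add_mul]

lemma tp_smul_left (c : ℂ) (x : EuclideanSpace ℂ ι) (z : EuclideanSpace ℂ κ) :
    tp (c • x) z = c • tp x z := by
  ext p; simp [tp_apply, mul_assoc]

lemma tp_zero_left (z : EuclideanSpace ℂ κ) : tp (0 : EuclideanSpace ℂ ι) z = 0 := by
  ext p; simp [tp_apply]

lemma inner_tp (x x' : EuclideanSpace ℂ ι) (z z' : EuclideanSpace ℂ κ) :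
    ⟪tp x z, tp x' z'⟫ = ⟪x, x'⟫ * ⟪z, z'⟫ := by
  simp only [PiLp.inner_apply, RCLike.inner_apply, tp_apply]
  rw [← Finset.univ_product_univ, Finset.sum_product, Finset.sum_mul_sum]
  exact Finset.sum_congr rfl fun i _ => Finset.sum_congr rfl fun j _ => by
    simp only [_root_.map_mul]; ring

/-! ### `toEuclideanLin` lemmas -/

lemma toEuclideanLin_mul_apply {ι' : Type*} [Fintype ι'] [DecidableEq ι']
    (M P : Matrix ι' ι' ℂ) (x : EuclideanSpace ℂ ι') :
    Matrix.toEuclideanLin (M * P) x = Matrix.toEuclideanLin M (Matrix.toEuclideanLin P x) := by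
  simp [Matrix.toEuclideanLin_apply, Matrix.mulVec_mulVec]

lemma toEuclideanLin_one_apply {ι' : Type*} [Fintype ι'] [DecidableEq ι']
    (x : EuclideanSpace ℂ ι') : Matrix.toEuclideanLin (1 : Matrix ι' ι' ℂ) x = x := by
  simp [Matrix.toEuclideanLin_apply]

lemma toEuclideanLin_kron [DecidableEq ι] [DecidableEq κ]
    (M : Matrix ι ι ℂ) (P : Matrix κ κ ℂ) (x : EuclideanSpace ℂ ι) (z : EuclideanSpace ℂ κ) :
    Matrix.toEuclideanLin (M ⊗ₖ P) (tp x z)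
      = tp (Matrix.toEuclideanLin M x) (Matrix.toEuclideanLin P z) := by
  ext p
  simp only [Matrix.toEuclideanLin_apply, tp]
  show ((M ⊗ₖ P).mulVec fun q => x q.1 * z q.2) p = (M.mulVec _ p.1) * (P.mulVec _ p.2)
  simp only [Matrix.mulVec, dotProduct, Matrix.kroneckerMap_apply]
  rw [Fintype.sum_prod_type, Finset.sum_mul_sum]
  exact Finset.sum_congr rfl fun i _ => Finset.sum_congr rfl fun j _ => by ring

/-! ### Euclidean sum application -/

lemma euclid_sum_apply {α β : Type*} [Fintype α] (s : Finset β)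
    (f : β → EuclideanSpace ℂ α) (a : α) : (∑ i ∈ s, f i) a = ∑ i ∈ s, f i a :=
  map_sum (PiLp.projₗ (𝕜 := ℂ) 2 (fun _ : α => ℂ) a) f s

/-! ### `ω` and Fourier vectors -/

lemma ω_prim {N : ℕ} [NeZero N] : IsPrimitiveRoot (ω N) N :=
  Complex.isPrimitiveRoot_exp N (NeZero.ne N)

lemma ω_pow_N {N : ℕ} [NeZero N] : ω N ^ N = 1 := ω_prim.pow_eq_one

lemma conj_ω_mul {N : ℕ} : (starRingEnd ℂ) (ω N) * ω N = 1 := by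
  rw [ω, ← Complex.exp_conj, ← Complex.exp_add]
  rw [show (starRingEnd ℂ) (2 * ↑Real.pi * Complex.I / ↑N) = -(2 * ↑Real.pi * Complex.I / ↑N) by
    simp [map_div₀, Complex.conj_I, map_ofNat]; ring]
  simp

lemma fHat_apply {N : ℕ} (k y : Fin N) :
    fHat N k y = (↑(Real.sqrt N))⁻¹ * ω N ^ ((k : ℕ) * (y : ℕ)) := by
  simp only [fHat, PiLp.smul_apply, smul_eq_mul]
  congr 1
  rw [euclid_sum_apply]
  simp [e, EuclideanSpace.single_apply]

lemma conj_fHat_mul {N : ℕ} (k l y : Fin N) :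
    (starRingEnd ℂ) (fHat N k y) * fHat N l y
      = (N : ℂ)⁻¹ * (((starRingEnd ℂ) (ω N)) ^ ((k:ℕ)*(y:ℕ)) * ω N ^ ((l:ℕ)*(y:ℕ))) := by
  rw [fHat_apply, fHat_apply, _root_.map_mul, map_inv₀, Complex.conj_ofReal, map_pow]
  have hs : ((Real.sqrt N : ℝ) : ℂ) * ((Real.sqrt N : ℝ) : ℂ) = (N : ℂ) := by
    norm_cast; rw [Real.mul_self_sqrt (Nat.cast_nonneg N)]
  rw [← hs]; ring

lemma inner_fHat_same {N : ℕ} [NeZero N] (k : Fin N) : ⟪fHat N k, fHat N k⟫ = 1 := by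
  rw [PiLp.inner_apply]
  simp only [RCLike.inner_apply', conj_fHat_mul]
  have h : ∀ y : Fin N, ((starRingEnd ℂ) (ω N)) ^ ((k:ℕ)*(y:ℕ)) * ω N ^ ((k:ℕ)*(y:ℕ)) = 1 := by
    intro y; rw [← mul_pow, conj_ω_mul, one_pow]
  simp only [h, mul_one, Finset.sum_const, Finset.card_univ, Fintype.card_fin, nsmul_eq_mul]
  rw [mul_inv_cancel₀]
  exact_mod_cast (NeZero.ne N)

lemma inner_fHat_ne' {N : ℕ} [NeZero N] {k l : Fin N} (h : (k:ℕ) < (l:ℕ)) :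
    ⟪fHat N k, fHat N l⟫ = 0 := by
  rw [PiLp.inner_apply]
  simp only [RCLike.inner_apply', conj_fHat_mul]
  rw [← Finset.mul_sum]
  have key : ∀ y : Fin N,
      ((starRingEnd ℂ) (ω N)) ^ ((k:ℕ)*(y:ℕ)) * ω N ^ ((l:ℕ)*(y:ℕ))
        = (ω N ^ ((l:ℕ) - (k:ℕ))) ^ (y:ℕ) := by
    intro y
    have hly : (l:ℕ)*(y:ℕ) = (k:ℕ)*(y:ℕ) + ((l:ℕ)-(k:ℕ))*(y:ℕ) := by
      rw [← add_mul, Nat.add_sub_cancel' h.le]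
    rw [hly, pow_add, ← mul_assoc, ← mul_pow, conj_ω_mul, one_pow, one_mul, pow_mul]
  simp only [key]
  have h1 : (ω N ^ ((l:ℕ) - (k:ℕ))) ≠ 1 :=
    ω_prim.pow_ne_one_of_pos_of_lt (Nat.sub_pos_of_lt h).ne' (lt_of_le_of_lt (Nat.sub_le _ _) l.isLt)
  have hN1 : (ω N ^ ((l:ℕ) - (k:ℕ))) ^ N = 1 := by
    rw [← pow_mul, mul_comm, pow_mul, ω_pow_N, one_pow]
  rw [Fin.sum_univ_eq_sum_range (fun y => (ω N ^ ((l:ℕ) - (k:ℕ))) ^ y), geom_sum_eq h1, hN1,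
    sub_self, zero_div, mul_zero]

lemma inner_fHat {N : ℕ} [NeZero N] (k l : Fin N) :
    ⟪fHat N k, fHat N l⟫ = if k = l then 1 else 0 := by
  rcases lt_trichotomy (k:ℕ) (l:ℕ) with h | h | h
  · rw [inner_fHat_ne' h, if_neg (by intro hkl; subst hkl; exact lt_irrefl _ h)]
  · have : k = l := Fin.ext h
    subst this; rw [inner_fHat_same, if_pos rfl]
  · rw [if_neg (by intro hkl; subst hkl; exact lt_irrefl _ h)]
    have h0 := inner_fHat_ne' (N := N) h
    rw [← inner_conj_symm, h0, map_zero]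

/-! ### Kronecker / unitary helpers -/

lemma kron_conjTranspose {ι' κ' ι'' κ'' : Type*} [Fintype ι'] [Fintype κ']
    (M : Matrix ι' ι'' ℂ) (P : Matrix κ' κ'' ℂ) : (M ⊗ₖ P)ᴴ = Mᴴ ⊗ₖ Pᴴ := by
  ext p q
  simp [Matrix.conjTranspose_apply, Matrix.kroneckerMap_apply, mul_comm]

lemma kron_sum_right {ι' κ' β : Type*} (M : Matrix ι' ι' ℂ) (s : Finset β)
    (f : β → Matrix κ' κ' ℂ) : M ⊗ₖ (∑ y ∈ s, f y) = ∑ y ∈ s, M ⊗ₖ f y := by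
  ext p q
  simp [Matrix.kroneckerMap_apply, Matrix.sum_apply, Finset.mul_sum]

lemma sum_stdBasisMatrix_diag {κ' : Type*} [Fintype κ'] [DecidableEq κ'] :
    ∑ y : κ', Matrix.single y y (1:ℂ) = 1 := by
  ext i j
  simp [Matrix.sum_apply, Matrix.single, Matrix.one_apply, ite_and, eq_comm]

lemma stdBM_conjT' {κ' : Type*} [DecidableEq κ'] (i : κ') :
    (Matrix.single i i (1:ℂ))ᴴ = Matrix.single i i (1:ℂ) := by
  ext a b; simp [Matrix.conjTranspose_apply, Matrix.single, and_comm]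

lemma kron_mem_unitary {ι' κ' : Type*} [Fintype ι'] [DecidableEq ι'] [Fintype κ'] [DecidableEq κ']
    {M : Matrix ι' ι' ℂ} {P : Matrix κ' κ' ℂ}
    (hM : M ∈ Matrix.unitaryGroup ι' ℂ) (hP : P ∈ Matrix.unitaryGroup κ' ℂ) :
    M ⊗ₖ P ∈ Matrix.unitaryGroup (ι' × κ') ℂ := by
  rw [Matrix.mem_unitaryGroup_iff']
  rw [Matrix.star_eq_conjTranspose, kron_conjTranspose, ← Matrix.mul_kronecker_mul]
  rw [show Mᴴ * M = 1 from Matrix.mem_unitaryGroup_iff'.mp hM,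
    show Pᴴ * P = 1 from Matrix.mem_unitaryGroup_iff'.mp hP, Matrix.one_kronecker_one]

lemma one_mem_unitary {ι' : Type*} [Fintype ι'] [DecidableEq ι'] :
    (1 : Matrix ι' ι' ℂ) ∈ Matrix.unitaryGroup ι' ℂ := by
  rw [Matrix.mem_unitaryGroup_iff']; simp

lemma unitary_inner_self {ι' : Type*} [Fintype ι'] [DecidableEq ι']
    {M : Matrix ι' ι' ℂ} (hM : M ∈ Matrix.unitaryGroup ι' ℂ) (x : EuclideanSpace ℂ ι') :
    ⟪Matrix.toEuclideanLin M x, Matrix.toEuclideanLin M x⟫ = ⟪x, x⟫ := by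
  have h1 : Mᴴ * M = 1 := by
    have := Matrix.mem_unitaryGroup_iff'.mp hM
    rwa [Matrix.star_eq_conjTranspose] at this
  have h2 : LinearMap.adjoint (Matrix.toEuclideanLin M) (Matrix.toEuclideanLin M x) = x := by
    rw [← Matrix.toEuclideanLin_conjTranspose_eq_adjoint, ← toEuclideanLin_mul_apply, h1,
      toEuclideanLin_one_apply]
  have h3 := LinearMap.adjoint_inner_left (𝕜 := ℂ) (Matrix.toEuclideanLin M) x
    (Matrix.toEuclideanLin M x)
  rw [h2] at h3
  exact h3.symm

lemma shift_sum {M : Type*} [AddCommMonoid M] (n : ℕ) (a b w : ℕ → M)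
    (hw0 : w 0 = a 0) (hwsucc : ∀ k, w (k+1) = a (k+1) + b k) (ha : a (n+1) = 0) :
    ∑ k ∈ Finset.range (n+2), w k
      = ∑ k ∈ Finset.range (n+1), a k + ∑ k ∈ Finset.range (n+1), b k := by
  rw [Finset.sum_range_succ' w (n+1)]
  simp only [hwsucc, hw0]
  rw [Finset.sum_add_distrib, add_right_comm, ← Finset.sum_range_succ' a (n+1),
    Finset.sum_range_succ a (n+1), ha, add_zero]

/-! ### Unitarity of the oracle and of the algorithm -/

section Unitary
set_option linter.unusedSectionVars false
variable {ιV ιW : Type*} [Fintype ιV] [DecidableEq ιV] [Fintype ιW] [DecidableEq ιW]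
variable {u : EuclideanSpace ℂ ιV} (hu : ‖u‖ = 1)

lemma PuM_conjTranspose : (PuM u)ᴴ = PuM u := by
  ext i j; simp [PuM, Matrix.conjTranspose_apply, mul_comm]

include hu in
lemma PuM_mul_self : PuM u * PuM u = PuM u := by
  have h1 : ∑ k, (starRingEnd ℂ) (u k) * u k = 1 := by
    have h := inner_self_eq_norm_sq_to_K (𝕜 := ℂ) u
    rw [hu, PiLp.inner_apply] at h
    simp only [RCLike.inner_apply'] at h
    rw [h]; simp
  ext i j
  simp only [PuM, Matrix.mul_apply, Matrix.of_apply]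
  calc ∑ k, u i * star (u k) * (u k * star (u j))
      = (∑ k, (starRingEnd ℂ) (u k) * u k) * (u i * star (u j)) := by
        rw [Finset.sum_mul]; exact Finset.sum_congr rfl fun k _ => by
          simp only [RCLike.star_def]; ring
    _ = u i * star (u j) := by rw [h1, one_mul]

include hu in
lemma UyM_unitary {N : ℕ} [NeZero N] (y : Fin N) :
    UyM N u y ∈ Matrix.unitaryGroup ιV ℂ := by
  rw [Matrix.mem_unitaryGroup_iff', Matrix.star_eq_conjTranspose]
  have hP2 := PuM_mul_self hu
  set P := PuM u with hPdef
  have hct : (UyM N u y)ᴴ = (starRingEnd ℂ) (ω N ^ (y:ℕ)) • P + (1 - P) := by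
    simp [UyM, Matrix.conjTranspose_smul, PuM_conjTranspose, Matrix.conjTranspose_sub, hPdef]
  rw [hct]
  show ((starRingEnd ℂ) (ω N ^ (y:ℕ)) • P + (1 - P)) * (ω N ^ (y:ℕ) • P + (1 - P)) = 1
  have hPsub : P * (1 - P) = 0 := by rw [Matrix.mul_sub, Matrix.mul_one, hP2, sub_self]
  have hsubP : (1 - P) * P = 0 := by rw [Matrix.sub_mul, Matrix.one_mul, hP2, sub_self]
  have hsubsub : (1 - P) * (1 - P) = 1 - P := by
    rw [Matrix.sub_mul, Matrix.one_mul, hPsub, sub_zero]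
  rw [add_mul, mul_add, mul_add]
  simp only [smul_mul_assoc, mul_smul_comm, smul_smul]
  rw [hP2, hPsub, hsubP, hsubsub, smul_zero, smul_zero, add_zero, zero_add]
  have hcc : (ω N ^ (y:ℕ)) * (starRingEnd ℂ) (ω N ^ (y:ℕ)) = 1 := by
    rw [mul_comm, map_pow, ← mul_pow, conj_ω_mul, one_pow]
  rw [hcc, one_smul, add_sub_cancel]

include hu in
lemma cUyM_unitary {N : ℕ} [NeZero N] (y : Fin N) :
    cUyM N u y ∈ Matrix.unitaryGroup (Fin 2 × ιV) ℂ := by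
  rw [Matrix.mem_unitaryGroup_iff', Matrix.star_eq_conjTranspose]
  have hU := Matrix.mem_unitaryGroup_iff'.mp (UyM_unitary hu y)
  rw [Matrix.star_eq_conjTranspose] at hU
  have hct : (cUyM N u y)ᴴ = Matrix.single 0 0 (1:ℂ) ⊗ₖ (1 : Matrix ιV ιV ℂ)
      + Matrix.single 1 1 (1:ℂ) ⊗ₖ (UyM N u y)ᴴ := by
    rw [cUyM, Matrix.conjTranspose_add, kron_conjTranspose, kron_conjTranspose,
      stdBM_conjT', stdBM_conjT', Matrix.conjTranspose_one]
  rw [hct, cUyM]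
  rw [add_mul, mul_add, mul_add, ← Matrix.mul_kronecker_mul, ← Matrix.mul_kronecker_mul,
    ← Matrix.mul_kronecker_mul, ← Matrix.mul_kronecker_mul]
  have h01 : Matrix.single (0:Fin 2) (0:Fin 2) (1:ℂ)
      * Matrix.single (1:Fin 2) (1:Fin 2) (1:ℂ) = 0 := by
    apply Matrix.single_mul_single_of_ne; decide
  have h10 : Matrix.single (1:Fin 2) (1:Fin 2) (1:ℂ)
      * Matrix.single (0:Fin 2) (0:Fin 2) (1:ℂ) = 0 := by
    apply Matrix.single_mul_single_of_ne; decide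
  have h00 : Matrix.single (0:Fin 2) (0:Fin 2) (1:ℂ)
      * Matrix.single (0:Fin 2) (0:Fin 2) (1:ℂ)
      = Matrix.single (0:Fin 2) (0:Fin 2) (1:ℂ) := by
    rw [Matrix.single_mul_single_same, one_mul]
  have h11 : Matrix.single (1:Fin 2) (1:Fin 2) (1:ℂ)
      * Matrix.single (1:Fin 2) (1:Fin 2) (1:ℂ)
      = Matrix.single (1:Fin 2) (1:Fin 2) (1:ℂ) := by
    rw [Matrix.single_mul_single_same, one_mul]
  simp only [h01, h10, h00, h11, Matrix.zero_kronecker, add_zero, zero_add, one_mul,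
    Matrix.one_mul, hU, mul_one]
  rw [← Matrix.add_kronecker]
  rw [show Matrix.single (0:Fin 2) (0:Fin 2) (1:ℂ)
      + Matrix.single (1:Fin 2) (1:Fin 2) (1:ℂ) = 1 from by
    ext a b; fin_cases a <;> fin_cases b <;> simp [Matrix.single, Matrix.one_apply]]
  exact Matrix.one_kronecker_one

include hu in
lemma oracle_unitary {N : ℕ} [NeZero N] :
    oracleM N u ιW ∈ Matrix.unitaryGroup (((Fin 2 × ιV) × ιW) × Fin N) ℂ := by
  rw [Matrix.mem_unitaryGroup_iff', Matrix.star_eq_conjTranspose]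
  have hXu : ∀ y : Fin N,
      (cUyM N u y ⊗ₖ (1 : Matrix ιW ιW ℂ))ᴴ * (cUyM N u y ⊗ₖ (1 : Matrix ιW ιW ℂ)) = 1 := by
    intro y
    have := Matrix.mem_unitaryGroup_iff'.mp (kron_mem_unitary (cUyM_unitary hu y)
      (one_mem_unitary (ι' := ιW)))
    rwa [Matrix.star_eq_conjTranspose] at this
  simp only [kron_conjTranspose, Matrix.conjTranspose_one] at hXu
  rw [oracleM, Matrix.conjTranspose_sum]
  simp only [kron_conjTranspose, stdBM_conjT', Matrix.conjTranspose_one]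
  rw [Finset.sum_mul_sum]
  have hdiag : ∀ y : Fin N,
      ∑ z : Fin N, (((cUyM N u y)ᴴ ⊗ₖ (1 : Matrix ιW ιW ℂ)) ⊗ₖ Matrix.single y y (1:ℂ)) *
        ((cUyM N u z ⊗ₖ (1 : Matrix ιW ιW ℂ)) ⊗ₖ Matrix.single z z (1:ℂ))
      = (1 : Matrix ((Fin 2 × ιV) × ιW) ((Fin 2 × ιV) × ιW) ℂ)
          ⊗ₖ Matrix.single y y (1:ℂ) := by
    intro y
    rw [Finset.sum_eq_single y]
    · rw [← Matrix.mul_kronecker_mul, hXu, Matrix.single_mul_single_same, one_mul]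
    · intro z _ hzy
      rw [← Matrix.mul_kronecker_mul,
        Matrix.single_mul_single_of_ne (c:=(1:ℂ)) y y z hzy.symm (1:ℂ),
        Matrix.kronecker_zero]
    · intro h; exact absurd (Finset.mem_univ y) h
  simp only [hdiag]
  rw [← kron_sum_right, sum_stdBasisMatrix_diag, Matrix.one_kronecker_one]

include hu in
lemma algOp_unitary {N : ℕ} [NeZero N]
    (A : ℕ → Matrix ((Fin 2 × ιV) × ιW) ((Fin 2 × ιV) × ιW) ℂ)
    (hA : ∀ i, A i ∈ Matrix.unitaryGroup ((Fin 2 × ιV) × ιW) ℂ) (n : ℕ) :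
    algOp A (oracleM N u ιW) n ∈ Matrix.unitaryGroup (((Fin 2 × ιV) × ιW) × Fin N) ℂ := by
  induction n with
  | zero => exact kron_mem_unitary (hA 0) one_mem_unitary
  | succ n ih =>
      exact mul_mem (mul_mem (kron_mem_unitary (hA (n+1)) one_mem_unitary)
        (oracle_unitary hu)) ih

end Unitary

/-! ### Oracle decomposition and action -/

section Action
set_option linter.unusedSectionVars false
variable {ιV ιW : Type*} [Fintype ιV] [DecidableEq ιV] [Fintype ιW] [DecidableEq ιW]

/-- The "B" part of the oracle. -/
def BM (N : ℕ) (u : EuclideanSpace ℂ ιV) (ιW : Type*) [Fintype ιW] [DecidableEq ιW] :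
    Matrix ((Fin 2 × ιV) × ιW) ((Fin 2 × ιV) × ιW) ℂ :=
  (Matrix.single 0 0 (1 : ℂ) ⊗ₖ (1 : Matrix ιV ιV ℂ)
    + Matrix.single 1 1 (1 : ℂ) ⊗ₖ (1 - PuM u)) ⊗ₖ (1 : Matrix ιW ιW ℂ)

/-- The "C" part of the oracle. -/
def CM (N : ℕ) (u : EuclideanSpace ℂ ιV) (ιW : Type*) [Fintype ιW] [DecidableEq ιW] :
    Matrix ((Fin 2 × ιV) × ιW) ((Fin 2 × ιV) × ιW) ℂ :=
  (Matrix.single 1 1 (1 : ℂ) ⊗ₖ PuM u) ⊗ₖ (1 : Matrix ιW ιW ℂ)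

lemma oracle_decomp (N : ℕ) (u : EuclideanSpace ℂ ιV) :
    oracleM N u ιW = BM N u ιW ⊗ₖ (1 : Matrix (Fin N) (Fin N) ℂ)
      + CM N u ιW ⊗ₖ Matrix.diagonal (fun y : Fin N => ω N ^ (y : ℕ)) := by
  have hcU : ∀ y : Fin N, cUyM N u y ⊗ₖ (1 : Matrix ιW ιW ℂ)
      = BM N u ιW + ω N ^ (y:ℕ) • CM N u ιW := by
    intro y
    rw [cUyM, UyM, BM, CM]
    simp only [Matrix.kronecker_add, Matrix.add_kronecker, Matrix.kronecker_smul,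
      Matrix.smul_kronecker]
    abel
  have hdiagsum : Matrix.diagonal (fun y : Fin N => ω N ^ (y:ℕ))
      = ∑ y : Fin N, ω N ^ (y:ℕ) • Matrix.single y y (1:ℂ) := by
    ext i j
    simp [Matrix.sum_apply, Matrix.diagonal_apply, Matrix.single, ite_and, eq_comm,
      smul_eq_mul, mul_ite]
  have hterm : ∀ y : Fin N,
      (cUyM N u y ⊗ₖ (1 : Matrix ιW ιW ℂ)) ⊗ₖ Matrix.single y y (1:ℂ)
      = BM N u ιW ⊗ₖ Matrix.single y y (1:ℂ)
        + CM N u ιW ⊗ₖ (ω N ^ (y:ℕ) • Matrix.single y y (1:ℂ)) := by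
    intro y
    rw [hcU, Matrix.add_kronecker, Matrix.smul_kronecker, ← Matrix.kronecker_smul]
  rw [oracleM]
  simp only [hterm]
  rw [Finset.sum_add_distrib, ← kron_sum_right, ← kron_sum_right, sum_stdBasisMatrix_diag,
    ← hdiagsum]

lemma diag_fHat {N : ℕ} [NeZero N] (m : ℕ) :
    Matrix.toEuclideanLin (Matrix.diagonal fun y : Fin N => ω N ^ (y:ℕ))
        (fHat N ((m : ℕ) : Fin N))
      = fHat N (((m + 1 : ℕ)) : Fin N) := by
  ext y
  have hLHS : (Matrix.toEuclideanLin (Matrix.diagonal fun y : Fin N => ω N ^ (y:ℕ))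
      (fHat N ((m : ℕ) : Fin N))) y
      = ω N ^ (y:ℕ) * fHat N ((m : ℕ) : Fin N) y := by
    show ((Matrix.diagonal fun y : Fin N => ω N ^ (y:ℕ)).mulVec
      fun z => fHat N ((m : ℕ) : Fin N) z) y = _
    rw [Matrix.mulVec_diagonal]
  rw [hLHS, fHat_apply, fHat_apply]
  rw [Fin.val_natCast, Fin.val_natCast]
  rw [← mul_assoc, mul_comm (ω N ^ (y:ℕ)) _, mul_assoc, ← pow_add]
  congr 1
  rw [pow_eq_pow_mod ((y:ℕ) + (m % N) * (y:ℕ)) ω_pow_N,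
    pow_eq_pow_mod (((m + 1) % N) * (y:ℕ)) ω_pow_N]
  congr 1
  have h1 : (y:ℕ) + (m % N) * (y:ℕ) ≡ (m + 1) * (y:ℕ) [MOD N] := by
    calc (y:ℕ) + (m % N) * (y:ℕ) ≡ (y:ℕ) + m * (y:ℕ) [MOD N] :=
          Nat.ModEq.add_left _ ((Nat.mod_modEq m N).mul_right _)
      _ = (m + 1) * (y:ℕ) := by ring
  have h2 : ((m + 1) % N) * (y:ℕ) ≡ (m + 1) * (y:ℕ) [MOD N] :=
    (Nat.mod_modEq (m+1) N).mul_right _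
  exact h1.trans h2.symm

lemma oracle_action {N : ℕ} [NeZero N] (u : EuclideanSpace ℂ ιV)
    (x : EuclideanSpace ℂ ((Fin 2 × ιV) × ιW)) (m : ℕ) :
    Matrix.toEuclideanLin (oracleM N u ιW) (tp x (fHat N ((m : ℕ) : Fin N)))
      = tp (Matrix.toEuclideanLin (BM N u ιW) x) (fHat N ((m : ℕ) : Fin N))
        + tp (Matrix.toEuclideanLin (CM N u ιW) x) (fHat N (((m + 1 : ℕ)) : Fin N)) := by
  rw [oracle_decomp, map_add, LinearMap.add_apply, toEuclideanLin_kron, toEuclideanLin_kron,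
    toEuclideanLin_one_apply, diag_fHat]

end Action

end SparseHelpers

noncomputable section

open Fin.NatCast

/-- **Sparse representation of the final state.**  For a `q`-query algorithm with
`0 ≤ q ≤ N-1`, the final state
`ψ = (A_q ⊗ id) c𝔘 (A_{q-1} ⊗ id) ⋯ c𝔘 (A_0 ⊗ id) (φ₀ ⊗ 0̂)`
can be written as `ψ = ∑_{k=0}^q α_k • (ψ_k ⊗ k̂)` with unit vectors `ψ_k ∈ H` and
coefficients satisfying `∑_k |α_k|² = 1`. -/
theorem stmt_7 {ιV ιW : Type*} [Fintype ιV] [DecidableEq ιV] [Fintype ιW] [DecidableEq ιW]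
    {N : ℕ} [NeZero N] (u : EuclideanSpace ℂ ιV) (hu : ‖u‖ = 1)
    {q : ℕ} (hq : q + 1 ≤ N)
    (A : ℕ → Matrix ((Fin 2 × ιV) × ιW) ((Fin 2 × ιV) × ιW) ℂ)
    (hA : ∀ i, A i ∈ Matrix.unitaryGroup ((Fin 2 × ιV) × ιW) ℂ)
    (φ₀ : EuclideanSpace ℂ ((Fin 2 × ιV) × ιW)) (hφ₀ : ‖φ₀‖ = 1) :
    ∃ (α : Fin (q + 1) → ℂ) (ψk : Fin (q + 1) → EuclideanSpace ℂ ((Fin 2 × ιV) × ιW)),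
      (∀ k, ‖ψk k‖ = 1) ∧ (∑ k, ‖α k‖ ^ 2 = 1) ∧
      Matrix.toEuclideanLin (algOp A (oracleM N u ιW) q) (tp φ₀ (fHat N 0))
        = ∑ k : Fin (q + 1), α k • tp (ψk k) (fHat N (Fin.castLE hq k)) := by
  classical
  -- abbreviations
  set Bl := Matrix.toEuclideanLin (BM N u ιW) with hBl
  set Cl := Matrix.toEuclideanLin (CM N u ιW) with hCl
  -- the key induction: sparse representation with unnormalized coefficients
  have key : ∀ i : ℕ, ∃ χ : ℕ → EuclideanSpace ℂ ((Fin 2 × ιV) × ιW),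
      (∀ m, i + 1 ≤ m → χ m = 0) ∧
      Matrix.toEuclideanLin (algOp A (oracleM N u ιW) i) (tp φ₀ (fHat N 0))
        = ∑ k ∈ Finset.range (i+1), tp (χ k) (fHat N ((k : ℕ) : Fin N)) := by
    intro i
    induction i with
    | zero =>
        refine ⟨fun m => if m = 0 then Matrix.toEuclideanLin (A 0) φ₀ else 0, ?_, ?_⟩
        · intro m hm
          have hm0 : m ≠ 0 := by omega
          simp [hm0]
        · rw [show algOp A (oracleM N u ιW) 0 = A 0 ⊗ₖ (1 : Matrix (Fin N) (Fin N) ℂ) from rfl]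
          rw [show (0 : Fin N) = ((0 : ℕ) : Fin N) by simp]
          rw [toEuclideanLin_kron, toEuclideanLin_one_apply, Finset.sum_range_one]
          simp
    | succ i ih =>
        obtain ⟨χ, hvan, hstate⟩ := ih
        set LA := Matrix.toEuclideanLin (A (i+1)) with hLA
        set χ' : ℕ → EuclideanSpace ℂ ((Fin 2 × ιV) × ιW) :=
          fun m => if m = 0 then LA (Bl (χ 0)) else LA (Bl (χ m) + Cl (χ (m-1))) with hχ'
        have hχ'0 : χ' 0 = LA (Bl (χ 0)) := by simp [hχ']
        have hχ'succ : ∀ k, χ' (k+1) = LA (Bl (χ (k+1))) + LA (Cl (χ k)) := by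
          intro k; simp [hχ', map_add]
        refine ⟨χ', ?_, ?_⟩
        · intro m hm
          obtain ⟨m', rfl⟩ : ∃ m', m = m' + 1 := ⟨m - 1, by omega⟩
          rw [hχ'succ, hvan (m'+1) (by omega), hvan m' (by omega)]
          simp
        · rw [show algOp A (oracleM N u ιW) (i+1)
              = (A (i+1) ⊗ₖ (1 : Matrix (Fin N) (Fin N) ℂ)) * oracleM N u ιW
                * algOp A (oracleM N u ιW) i from rfl]
          rw [toEuclideanLin_mul_apply, toEuclideanLin_mul_apply, hstate, map_sum, map_sum]
          have hterm : ∀ k ∈ Finset.range (i+1),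
              Matrix.toEuclideanLin (A (i+1) ⊗ₖ (1 : Matrix (Fin N) (Fin N) ℂ))
                (Matrix.toEuclideanLin (oracleM N u ιW) (tp (χ k) (fHat N ((k : ℕ) : Fin N))))
              = tp (LA (Bl (χ k))) (fHat N ((k : ℕ) : Fin N))
                + tp (LA (Cl (χ k))) (fHat N (((k + 1 : ℕ)) : Fin N)) := by
            intro k _
            rw [oracle_action, map_add, toEuclideanLin_kron, toEuclideanLin_kron,
              toEuclideanLin_one_apply, toEuclideanLin_one_apply, hBl, hCl, hLA]
          rw [Finset.sum_congr rfl hterm, Finset.sum_add_distrib]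
          have hw0' : tp (χ' 0) (fHat N ((0:ℕ) : Fin N))
              = tp (LA (Bl (χ 0))) (fHat N ((0:ℕ) : Fin N)) := by rw [hχ'0]
          have hwsucc' : ∀ k, tp (χ' (k+1)) (fHat N (((k+1 : ℕ)) : Fin N))
              = tp (LA (Bl (χ (k+1)))) (fHat N (((k+1 : ℕ)) : Fin N))
                + tp (LA (Cl (χ k))) (fHat N (((k+1 : ℕ)) : Fin N)) := fun k => by
            rw [hχ'succ k, tp_add_left]
          have hatop : tp (LA (Bl (χ (i+1)))) (fHat N (((i+1 : ℕ)) : Fin N)) = 0 := by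
            rw [hvan (i+1) le_rfl, map_zero, map_zero, tp_zero_left]
          exact (shift_sum i
            (fun k => tp (LA (Bl (χ k))) (fHat N ((k : ℕ) : Fin N)))
            (fun k => tp (LA (Cl (χ k))) (fHat N (((k + 1 : ℕ)) : Fin N)))
            (fun k => tp (χ' k) (fHat N ((k : ℕ) : Fin N)))
            hw0' hwsucc' hatop).symm
  obtain ⟨χ, -, hstate⟩ := key q
  -- translate the index set
  have hcastval : ∀ k : Fin (q+1), (((k : ℕ) : ℕ) : Fin N) = Fin.castLE hq k := by
    intro k
    ext
    rw [Fin.val_natCast, Nat.mod_eq_of_lt (lt_of_lt_of_le k.isLt hq)]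
    rfl
  have hstate' : Matrix.toEuclideanLin (algOp A (oracleM N u ιW) q) (tp φ₀ (fHat N 0))
      = ∑ k : Fin (q+1), tp (χ (k : ℕ)) (fHat N (Fin.castLE hq k)) := by
    rw [hstate, ← Fin.sum_univ_eq_sum_range (fun k => tp (χ k) (fHat N ((k : ℕ) : Fin N)))]
    exact Finset.sum_congr rfl fun k _ => by rw [hcastval]
  -- total norm is 1
  have hnormsum : ∑ k : Fin (q+1), ((‖χ (k : ℕ)‖ : ℝ) : ℂ) ^ 2 = 1 := by
    have h1 : (inner ℂ (Matrix.toEuclideanLin (algOp A (oracleM N u ιW) q) (tp φ₀ (fHat N 0)))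
        (Matrix.toEuclideanLin (algOp A (oracleM N u ιW) q) (tp φ₀ (fHat N 0))) : ℂ) = 1 := by
      rw [unitary_inner_self (algOp_unitary hu A hA q), inner_tp, inner_fHat_same,
        inner_self_eq_norm_sq_to_K, hφ₀, mul_one]
      norm_num
    rw [hstate'] at h1
    rw [sum_inner] at h1
    have h2 : ∀ k : Fin (q+1),
        (inner ℂ (tp (χ (k : ℕ)) (fHat N (Fin.castLE hq k)))
          (∑ l : Fin (q+1), tp (χ (l : ℕ)) (fHat N (Fin.castLE hq l))) : ℂ)
        = ((‖χ (k : ℕ)‖ : ℝ) : ℂ) ^ 2 := by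
      intro k
      rw [inner_sum]
      have h3 : ∀ l : Fin (q+1),
          (inner ℂ (tp (χ (k : ℕ)) (fHat N (Fin.castLE hq k)))
            (tp (χ (l : ℕ)) (fHat N (Fin.castLE hq l))) : ℂ)
          = if l = k then ((‖χ (k : ℕ)‖ : ℝ) : ℂ) ^ 2 else 0 := by
        intro l
        rw [inner_tp, inner_fHat]
        by_cases hlk : l = k
        · subst hlk
          rw [if_pos rfl, if_pos rfl, mul_one, inner_self_eq_norm_sq_to_K]
          norm_num
        · rw [if_neg hlk, if_neg (fun hc => hlk (Fin.castLE_injective hq (by rw [hc]))), mul_zero]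
      rw [Finset.sum_congr rfl fun l _ => h3 l, Finset.sum_ite_eq' Finset.univ k
        (fun _ => ((‖χ (k : ℕ)‖ : ℝ) : ℂ) ^ 2), if_pos (Finset.mem_univ k)]
    rw [Finset.sum_congr rfl fun k _ => h2 k] at h1
    exact h1
  -- define the normalized vectors and coefficients
  refine ⟨fun k => ((‖χ (k : ℕ)‖ : ℝ) : ℂ),
    fun k => if h : χ (k : ℕ) = 0 then φ₀ else ((‖χ (k : ℕ)‖ : ℝ) : ℂ)⁻¹ • χ (k : ℕ),
    ?_, ?_, ?_⟩
  · intro k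
    show ‖(if h : χ (k : ℕ) = 0 then φ₀ else ((‖χ (k : ℕ)‖ : ℝ) : ℂ)⁻¹ • χ (k : ℕ))‖ = 1
    by_cases h : χ (k : ℕ) = 0
    · rw [dif_pos h]; exact hφ₀
    · rw [dif_neg h, norm_smul]
      rw [norm_inv, Complex.norm_real, Real.norm_eq_abs, abs_of_nonneg (norm_nonneg _),
        inv_mul_cancel₀ (norm_ne_zero_iff.mpr h)]
  · show ∑ k : Fin (q+1), ‖((‖χ (k : ℕ)‖ : ℝ) : ℂ)‖ ^ 2 = 1
    have habs : ∀ k : Fin (q+1),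
        ‖((‖χ (k : ℕ)‖ : ℝ) : ℂ)‖ ^ 2 = ‖χ (k : ℕ)‖ ^ 2 := by
      intro k
      rw [Complex.norm_real, Real.norm_eq_abs, abs_of_nonneg (norm_nonneg _)]
    rw [Finset.sum_congr rfl fun k _ => habs k]
    have hreal : ∑ k : Fin (q+1), (‖χ (k : ℕ)‖ ^ 2 : ℝ) = 1 := by
      exact_mod_cast hnormsum
    exact hreal
  · rw [hstate']
    refine Finset.sum_congr rfl fun k _ => ?_
    symm
    show ((‖χ (k : ℕ)‖ : ℝ) : ℂ) • tp
        (if h : χ (k : ℕ) = 0 then φ₀ else ((‖χ (k : ℕ)‖ : ℝ) : ℂ)⁻¹ • χ (k : ℕ))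
        (fHat N (Fin.castLE hq k)) = tp (χ (k : ℕ)) (fHat N (Fin.castLE hq k))
    by_cases h : χ (k : ℕ) = 0
    · rw [dif_pos h, h]
      simp [tp_zero_left]
    · rw [dif_neg h, ← tp_smul_left, smul_smul,
        mul_inv_cancel₀ (by simpa using norm_ne_zero_iff.mpr h), one_smul]


end
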